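/- arXiv:0710.0394 — 3 statements merged into one kernel-verified Lean document; each statement's English description precedes it below -/
import Mathlib

section
/- If f and g are PORC functions on a set D of integers, h(x) = f(x)/g(x) for all x in D (with g(x) ≠ 0), and h takes only integer values on D, then h is PORC on D. -/
open Polynomial Filter

/-- `f : ℤ → ℚ` is PORC (polynomial on residue classes) on a set `D` of integers if
there is a positive integer `N` such that on the intersection of `D` with each residue
class mod `N`, `f` agrees with a polynomial with rational coefficients. -/
def IsPORC (D : Set ℤ) (f : ℤ → ℚ) : Prop :=
  ∃ N : ℕ, 0 < N ∧ ∀ j : ℤ, ∃ P : Polynomial ℚ,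
    ∀ x ∈ D, x % (N : ℤ) = j → f x = P.eval (x : ℚ)

/-- Clear denominators of a rational polynomial: there is a nonzero integer `d` such that
`d * T.eval x` is an integer for every integer `x`. -/
lemma porc_exists_denom (T : Polynomial ℚ) :
    ∃ d : ℤ, d ≠ 0 ∧ ∀ x : ℤ, ∃ m : ℤ, (d : ℚ) * T.eval (x : ℚ) = (m : ℚ) := by
  induction T using Polynomial.induction_on' with
  | add p q hp hq =>
      obtain ⟨d1, hd1, h1⟩ := hp
      obtain ⟨d2, hd2, h2⟩ := hq
      refine ⟨d1 * d2, mul_ne_zero hd1 hd2, fun x => ?_⟩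
      obtain ⟨m1, hm1⟩ := h1 x
      obtain ⟨m2, hm2⟩ := h2 x
      refine ⟨d2 * m1 + d1 * m2, ?_⟩
      rw [eval_add]
      push_cast
      linear_combination (d2 : ℚ) * hm1 + (d1 : ℚ) * hm2
  | monomial n a =>
      refine ⟨(a.den : ℤ), by exact_mod_cast a.den_ne_zero, fun x => ?_⟩
      refine ⟨a.num * x ^ n, ?_⟩
      have hden : ((a.den : ℤ) : ℚ) ≠ 0 := by exact_mod_cast a.den_ne_zero
      have key : (a.den : ℚ) * a = (a.num : ℚ) := by
        have h1 := Rat.num_div_den a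
        rw [div_eq_iff (by exact_mod_cast a.den_ne_zero : ((a.den : ℚ)) ≠ 0)] at h1
        linear_combination -h1
      rw [eval_monomial]
      push_cast
      linear_combination ((x : ℚ) ^ n) * key

lemma porc_key_atTop (A B : Polynomial ℚ) (hd : A.degree < B.degree) (T : Set ℤ)
    (hT : ¬ BddAbove T)
    (hAB : ∀ x ∈ T, B.eval (x : ℚ) ≠ 0 ∧ ∃ n : ℤ, A.eval (x : ℚ) / B.eval (x : ℚ) = (n : ℚ)) :
    A = 0 := by
  by_contra hA
  have hroots : {x : ℤ | A.eval (x : ℚ) = 0}.Finite := by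
    have h1 : {y : ℚ | A.IsRoot y}.Finite := Polynomial.finite_setOf_isRoot hA
    exact Set.Finite.preimage (Set.injOn_of_injective Int.cast_injective) h1
  set T' := T \ {x : ℤ | A.eval (x : ℚ) = 0} with hT'def
  have hT'b : ¬ BddAbove T' := by
    intro hb
    apply hT
    have hsub : T ⊆ T' ∪ {x : ℤ | A.eval (x : ℚ) = 0} := by
      intro x hx
      by_cases hxa : A.eval (x : ℚ) = 0
      · exact Or.inr hxa
      · exact Or.inl ⟨hx, hxa⟩
    exact (hb.union hroots.bddAbove).mono hsub
  set A' := A.map (algebraMap ℚ ℝ) with hA'def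
  set B' := B.map (algebraMap ℚ ℝ) with hB'def
  have hdeg' : A'.degree < B'.degree := by
    rwa [hA'def, hB'def, Polynomial.degree_map, Polynomial.degree_map]
  have htend : Tendsto (fun y : ℝ => A'.eval y / B'.eval y) atTop (nhds 0) :=
    Polynomial.div_tendsto_zero_of_degree_lt A' B' hdeg'
  have h2 : Tendsto (fun x : ℤ => A'.eval ((x : ℤ) : ℝ) / B'.eval ((x : ℤ) : ℝ))
      atTop (nhds 0) := htend.comp tendsto_intCast_atTop_atTop
  obtain ⟨M, hM⟩ := (Metric.tendsto_atTop.mp h2) 1 one_pos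
  obtain ⟨x, hxT', hxM⟩ := not_bddAbove_iff.mp hT'b M
  obtain ⟨hBx, n, hn⟩ := hAB x hxT'.1
  have hAx : A.eval (x : ℚ) ≠ 0 := hxT'.2
  have hn0 : n ≠ 0 := by
    intro h0
    rw [h0] at hn
    push_cast at hn
    rcases div_eq_zero_iff.mp hn with h | h
    · exact hAx h
    · exact hBx h
  have ecast : ∀ p : Polynomial ℚ,
      (p.map (algebraMap ℚ ℝ)).eval ((x : ℤ) : ℝ) = ((p.eval (x : ℚ) : ℚ) : ℝ) := by
    intro p
    have hx' : ((x : ℤ) : ℝ) = algebraMap ℚ ℝ ((x : ℤ) : ℚ) := by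
      simp
    rw [hx', Polynomial.eval_map, Polynomial.eval₂_at_apply]
    rfl
  have heval : A'.eval ((x : ℤ) : ℝ) / B'.eval ((x : ℤ) : ℝ) = ((n : ℤ) : ℝ) := by
    rw [hA'def, hB'def, ecast, ecast, ← Rat.cast_div, hn]
    push_cast
    ring
  have hdist := hM x hxM.le
  rw [heval, dist_zero_right, Real.norm_eq_abs] at hdist
  have : (1 : ℝ) ≤ |((n : ℤ) : ℝ)| := by
    have := Int.one_le_abs hn0
    calc (1 : ℝ) ≤ ((|n| : ℤ) : ℝ) := by exact_mod_cast this
    _ = |((n : ℤ) : ℝ)| := by push_cast; ring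
  linarith

lemma porc_key (A B : Polynomial ℚ) (hd : A.degree < B.degree) (T : Set ℤ)
    (hT : T.Infinite)
    (hAB : ∀ x ∈ T, B.eval (x : ℚ) ≠ 0 ∧ ∃ n : ℤ, A.eval (x : ℚ) / B.eval (x : ℚ) = (n : ℚ)) :
    A = 0 := by
  by_cases hb : BddAbove T
  · have hbb : ¬ BddBelow T := fun h => hT (h.finite_of_bddAbove hb)
    by_cases hA : A = 0
    · exact hA
    have hB : B ≠ 0 := by
      intro h0
      rw [h0, degree_zero] at hd
      exact absurd hd (by simp)
    set A₂ := A.comp (-X : Polynomial ℚ) with hA₂def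
    set B₂ := B.comp (-X : Polynomial ℚ) with hB₂def
    have hAA : A = A₂.comp (-X : Polynomial ℚ) := by
      rw [hA₂def, comp_assoc, neg_comp, X_comp, neg_neg, comp_X]
    have hBB : B = B₂.comp (-X : Polynomial ℚ) := by
      rw [hB₂def, comp_assoc, neg_comp, X_comp, neg_neg, comp_X]
    have hA₂0 : A₂ ≠ 0 := by
      intro h0
      apply hA
      rw [hAA, h0, zero_comp]
    have hnX : (-X : Polynomial ℚ).natDegree = 1 := by rw [natDegree_neg, natDegree_X]
    have hd₂ : A₂.degree < B₂.degree := by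
      rw [← natDegree_lt_natDegree_iff hA₂0, hA₂def, hB₂def, natDegree_comp, natDegree_comp,
        hnX, mul_one, mul_one]
      exact (natDegree_lt_natDegree_iff hA).mpr hd
    have e : ∀ (p : Polynomial ℚ) (x : ℤ),
        (p.comp (-X : Polynomial ℚ)).eval (x : ℚ) = p.eval (((-x : ℤ) : ℚ)) := by
      intro p x
      rw [eval_comp]
      push_cast
      simp
    have h0 : A₂ = 0 := by
      apply porc_key_atTop A₂ B₂ hd₂ {x : ℤ | -x ∈ T}
      · intro hb2
        apply hbb
        obtain ⟨M, hM⟩ := hb2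
        refine ⟨-M, fun y hy => ?_⟩
        have h1 : -y ∈ {x : ℤ | -x ∈ T} := by simp [hy]
        have h2 := hM h1
        omega
      · intro x hx
        obtain ⟨h1, n, hn⟩ := hAB (-x) hx
        refine ⟨?_, n, ?_⟩
        · rw [hB₂def, e B x]; exact h1
        · rw [hA₂def, hB₂def, e A x, e B x]; exact hn
    rw [hAA, h0, zero_comp]
  · exact porc_key_atTop A B hd T hb hAB

theorem porc_quotient (D : Set ℤ) (f g h : ℤ → ℚ)
    (hf : IsPORC D f) (hg : IsPORC D g)
    (hgne : ∀ x ∈ D, g x ≠ 0)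
    (hquot : ∀ x ∈ D, h x = f x / g x)
    (hint : ∀ x ∈ D, ∃ n : ℤ, h x = (n : ℚ)) :
    IsPORC D h := by
  classical
  obtain ⟨N₁, hN₁, hfP⟩ := hf
  obtain ⟨N₂, hN₂, hgQ⟩ := hg
  refine ⟨N₁ * N₂, Nat.mul_pos hN₁ hN₂, fun j => ?_⟩
  obtain ⟨P, hP⟩ := hfP (j % N₁)
  obtain ⟨Q, hQ⟩ := hgQ (j % N₂)
  set N : ℤ := ((N₁ * N₂ : ℕ) : ℤ) with hNdef
  have hPf : ∀ x ∈ D, x % N = j → f x = P.eval (x : ℚ) := by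
    intro x hx hxj
    apply hP x hx
    have hdvd : ((N₁ : ℤ)) ∣ N := ⟨(N₂ : ℤ), by push_cast [hNdef]; ring⟩
    rw [← Int.emod_emod_of_dvd x hdvd, hxj]
  have hQg : ∀ x ∈ D, x % N = j → g x = Q.eval (x : ℚ) := by
    intro x hx hxj
    apply hQ x hx
    have hdvd : ((N₂ : ℤ)) ∣ N := ⟨(N₁ : ℤ), by push_cast [hNdef]; ring⟩
    rw [← Int.emod_emod_of_dvd x hdvd, hxj]
  set S : Set ℤ := {x | x ∈ D ∧ x % N = j} with hSdef
  by_cases hSf : S.Finite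
  · refine ⟨Lagrange.interpolate hSf.toFinset (fun x : ℤ => (x : ℚ)) (fun x => h x), ?_⟩
    intro x hx hxj
    have hxS : x ∈ hSf.toFinset := by
      rw [Set.Finite.mem_toFinset]
      exact ⟨hx, hxj⟩
    exact (Lagrange.eval_interpolate_at_node _
      (Set.injOn_of_injective Int.cast_injective) hxS).symm
  · have hS : S.Infinite := hSf
    obtain ⟨x₀, hx₀⟩ := hS.nonempty
    have hQ0 : Q ≠ 0 := by
      intro h0
      apply hgne x₀ hx₀.1
      rw [hQg x₀ hx₀.1 hx₀.2, h0, eval_zero]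
    set Tq := P / Q with hTqdef
    set R := P % Q with hRdef
    have hPQR : Q * Tq + R = P := EuclideanDomain.div_add_mod P Q
    have hRdeg : R.degree < Q.degree := EuclideanDomain.mod_lt P hQ0
    obtain ⟨d, hd0, hdm⟩ := porc_exists_denom Tq
    have hCd : (C ((d : ℤ) : ℚ)) ≠ 0 := by
      rw [Ne, Polynomial.C_eq_zero]
      exact_mod_cast hd0
    have hA0 : (C ((d : ℤ) : ℚ)) * R = 0 := by
      apply porc_key (C ((d : ℤ) : ℚ) * R) Q ?_ S hS
      · intro x hx
        have hgx := hQg x hx.1 hx.2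
        have hfx := hPf x hx.1 hx.2
        have hQx : Q.eval (x : ℚ) ≠ 0 := by rw [← hgx]; exact hgne x hx.1
        refine ⟨hQx, ?_⟩
        obtain ⟨n, hn⟩ := hint x hx.1
        obtain ⟨m, hm⟩ := hdm x
        refine ⟨d * n - m, ?_⟩
        have hn' : P.eval (x : ℚ) = (n : ℚ) * Q.eval (x : ℚ) := by
          have := hquot x hx.1
          rw [hn, hfx, hgx] at this
          field_simp at this
          linarith [this]
        rw [eval_mul, eval_C, div_eq_iff hQx]
        have hR : R.eval (x : ℚ) = P.eval (x : ℚ) - Q.eval (x : ℚ) * Tq.eval (x : ℚ) := by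
          have : Q.eval (x : ℚ) * Tq.eval (x : ℚ) + R.eval (x : ℚ) = P.eval (x : ℚ) := by
            rw [← eval_mul, ← eval_add, hPQR]
          linarith
        rw [hR]
        push_cast
        linear_combination ((d : ℤ) : ℚ) * hn' - Q.eval (x : ℚ) * hm
      · rw [degree_C_mul (show ((d : ℤ) : ℚ) ≠ 0 by exact_mod_cast hd0)]
        exact hRdeg
    have hR0 : R = 0 := by
      rcases mul_eq_zero.mp hA0 with h' | h'
      · exact absurd h' hCd
      · exact h'
    refine ⟨Tq, ?_⟩
    intro x hx hxj
    have hgx := hQg x hx hxj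
    have hQx : Q.eval (x : ℚ) ≠ 0 := by rw [← hgx]; exact hgne x hx
    rw [hquot x hx, hPf x hx hxj, hgx]
    have hPQ : P = Q * Tq := by rw [← hPQR, hR0, add_zero]
    rw [hPQ, eval_mul, mul_comm, mul_div_assoc, div_self hQx, mul_one]
end

section
/- Let p be an odd prime and G a finite p-group of nilpotency class at most 2. Define on the underlying set of G the operations x + y = x·y·([y,x])^((p^k+1)/2 with p^k the order of [y,x], i.e. the unique square root of [y,x]) and bracket [x,y] equal to the group commutator. Then these operations make G into a Lie ring. -/
/-- The group commutator `[x,y] = x⁻¹y⁻¹xy`. -/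
def gComm {G : Type*} [Group G] (x y : G) : G := x⁻¹ * y⁻¹ * x * y

/-- The unique square root `z^{(p^k+1)/2}` of an element `z` of odd order `p^k`. -/
noncomputable def gSqrt {G : Type*} [Group G] (z : G) : G := z ^ ((orderOf z + 1) / 2)

/-- The Lazard addition `x + y = x · y · [y,x]^{1/2}`. -/
noncomputable def lazardAdd {G : Type*} [Group G] (x y : G) : G := x * y * gSqrt (gComm y x)

section Aux
variable {G : Type*} [Group G]

lemma gComm_one_left (x : G) : gComm 1 x = 1 := by unfold gComm; group
lemma gComm_self (x : G) : gComm x x = 1 := by unfold gComm; group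
lemma gComm_inv_self (x : G) : gComm x⁻¹ x = 1 := by unfold gComm; group
lemma gComm_swap (x y : G) : gComm y x = (gComm x y)⁻¹ := by unfold gComm; group

lemma gComm_eq_one_of_commute {a b : G} (h : Commute a b) : gComm a b = 1 := by
  unfold gComm
  rw [mul_assoc, h.eq]
  group

lemma commute_of_gComm_eq_one {a g : G} (h : gComm a g = 1) : Commute a g := by
  unfold gComm at h
  have h2 := congrArg (fun t => g * a * t) h
  exact (by simpa [mul_assoc] using h2 : a * g = g * a)

lemma gSqrt_commute {u v : G} (h : Commute u v) : Commute u (gSqrt v) :=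
  h.pow_right _

lemma gSqrt_sq {z : G} (h : Odd (orderOf z)) : gSqrt z * gSqrt z = z := by
  obtain ⟨k, hk⟩ := h
  have h2 : (orderOf z + 1) / 2 = k + 1 := by omega
  unfold gSqrt
  rw [h2, ← pow_add]
  have h3 : k + 1 + (k + 1) = orderOf z + 1 := by omega
  rw [h3, pow_succ, pow_orderOf_eq_one, one_mul]

lemma sqrt_unique (hodd : ∀ x : G, Odd (orderOf x)) {a b : G}
    (hab : Commute a b) (h : a * a = b * b) : a = b := by
  have h1 : (a * b⁻¹) * (a * b⁻¹) = 1 := by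
    have e : a * b⁻¹ * (a * b⁻¹) = a * a * (b * b)⁻¹ := by
      have e1 : a * b⁻¹ * (a * b⁻¹) = a * (b⁻¹ * a) * b⁻¹ := by group
      rw [e1, ← hab.inv_right.eq]
      group
    rw [e, h, mul_inv_cancel]
  obtain ⟨k, hk⟩ := hodd (a * b⁻¹)
  have h2 : a * b⁻¹ = ((a * b⁻¹) * (a * b⁻¹)) ^ (k + 1) := by
    rw [← sq, ← pow_mul]
    have : 2 * (k + 1) = orderOf (a * b⁻¹) + 1 := by omega
    rw [this, pow_succ, pow_orderOf_eq_one, one_mul]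
  rw [h1, one_pow] at h2
  exact mul_inv_eq_one.mp h2

lemma gSqrt_one : gSqrt (1 : G) = 1 := by simp [gSqrt]

lemma gSqrt_mul (hodd : ∀ x : G, Odd (orderOf x)) {a b : G} (hab : Commute a b) :
    gSqrt (a * b) = gSqrt a * gSqrt b := by
  have hsa : Commute (gSqrt a) b := (gSqrt_commute hab.symm).symm
  have hsb : Commute (gSqrt b) a := (gSqrt_commute hab).symm
  have hss : Commute (gSqrt a) (gSqrt b) := (gSqrt_commute (gSqrt_commute hab).symm).symm
  apply sqrt_unique hodd
  · -- Commute (gSqrt (a*b)) (gSqrt a * gSqrt b)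
    have c1 : Commute (gSqrt a) a := (gSqrt_commute (Commute.refl a)).symm
    have c4 : Commute (gSqrt b) b := (gSqrt_commute (Commute.refl b)).symm
    have h1 : Commute (gSqrt a * gSqrt b) (a * b) :=
      (c1.mul_right hsa).mul_left (hsb.mul_right c4)
    exact (gSqrt_commute h1).symm
  · rw [gSqrt_sq (hodd _), hss.symm.mul_mul_mul_comm, gSqrt_sq (hodd _), gSqrt_sq (hodd _)]

lemma gSqrt_inv (hodd : ∀ x : G, Odd (orderOf x)) (z : G) :
    gSqrt z⁻¹ = (gSqrt z)⁻¹ := by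
  apply sqrt_unique hodd
  · exact ((gSqrt_commute (gSqrt_commute (Commute.refl z).inv_left).symm).symm).inv_right
  · rw [gSqrt_sq (hodd _), ← mul_inv_rev, gSqrt_sq (hodd _)]

lemma gComm_mul_left (hC : ∀ x y g : G, Commute (gComm x y) g) (x y z : G) :
    gComm (x * y) z = gComm x z * gComm y z := by
  have hC' : ∀ x y g : G, x⁻¹ * y⁻¹ * x * y * g = g * (x⁻¹ * y⁻¹ * x * y) :=
    fun x y g => (hC x y g).eq
  calc gComm (x * y) z
      = y⁻¹ * ((x⁻¹ * z⁻¹ * x * z) * (z⁻¹ * y * z)) := by unfold gComm; group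
    _ = y⁻¹ * ((z⁻¹ * y * z) * (x⁻¹ * z⁻¹ * x * z)) := by rw [hC' x z (z⁻¹ * y * z)]
    _ = (y⁻¹ * z⁻¹ * y * z) * (x⁻¹ * z⁻¹ * x * z) := by group
    _ = (x⁻¹ * z⁻¹ * x * z) * (y⁻¹ * z⁻¹ * y * z) := (hC' x z (y⁻¹ * z⁻¹ * y * z)).symm
    _ = gComm x z * gComm y z := rfl

lemma gComm_mul_right (hC : ∀ x y g : G, Commute (gComm x y) g) (x y z : G) :
    gComm x (y * z) = gComm x y * gComm x z := by
  have hC' : ∀ x y g : G, x⁻¹ * y⁻¹ * x * y * g = g * (x⁻¹ * y⁻¹ * x * y) :=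
    fun x y g => (hC x y g).eq
  calc gComm x (y * z)
      = x⁻¹ * z⁻¹ * x * ((x⁻¹ * y⁻¹ * x * y) * z) := by unfold gComm; group
    _ = x⁻¹ * z⁻¹ * x * (z * (x⁻¹ * y⁻¹ * x * y)) := by rw [hC' x y z]
    _ = (x⁻¹ * z⁻¹ * x * z) * (x⁻¹ * y⁻¹ * x * y) := by group
    _ = (x⁻¹ * y⁻¹ * x * y) * (x⁻¹ * z⁻¹ * x * z) := (hC' x y (x⁻¹ * z⁻¹ * x * z)).symm
    _ = gComm x y * gComm x z := rfl

lemma gComm_mul_central_left {w : G} (hw : ∀ g : G, Commute w g) (a z : G) :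
    gComm (a * w) z = gComm a z := by
  have e1 : gComm (a * w) z = w⁻¹ * ((a⁻¹ * z⁻¹ * a) * (w * z)) := by
    unfold gComm; group
  rw [e1, (hw z).eq]
  have e2 : w⁻¹ * (a⁻¹ * z⁻¹ * a * (z * w)) = w⁻¹ * ((a⁻¹ * z⁻¹ * a * z) * w) := by group
  rw [e2, ← (hw _).eq]
  unfold gComm; group

lemma gComm_mul_central_right {w : G} (hw : ∀ g : G, Commute w g) (a z : G) :
    gComm a (z * w) = gComm a z := by
  have e1 : gComm a (z * w) = a⁻¹ * w⁻¹ * (z⁻¹ * a * z) * w := by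
    unfold gComm; group
  rw [e1]
  have e2 : a⁻¹ * w⁻¹ * (z⁻¹ * a * z) * w = a⁻¹ * (w⁻¹ * ((z⁻¹ * a * z) * w)) := by group
  rw [e2, ← (hw _).eq]
  unfold gComm; group

end Aux

/-- For an odd prime `p` and a finite group `G` of order `p^n` and nilpotency class
at most 2, the Lazard operations (addition `x+y = xy[y,x]^{1/2}` and bracket the group
commutator) make `G` into a Lie ring: addition is a commutative group operation with
identity `1` and inverse `x⁻¹`, and the bracket is biadditive, alternating and
satisfies the Jacobi identity. -/
theorem lazard_lie_ring {G : Type*} [Group G] [Finite G] (p n : ℕ) (hp : p.Prime)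
    (hodd : p ≠ 2) (hcard : Nat.card G = p ^ n)
    (hclass2 : ∀ x y z : G, gComm (gComm x y) z = 1) :
    (∀ x y : G, lazardAdd x y = lazardAdd y x) ∧
    (∀ x y z : G, lazardAdd (lazardAdd x y) z = lazardAdd x (lazardAdd y z)) ∧
    (∀ x : G, lazardAdd x 1 = x) ∧
    (∀ x : G, lazardAdd x x⁻¹ = 1) ∧
    (∀ x y z : G, gComm (lazardAdd x y) z = lazardAdd (gComm x z) (gComm y z)) ∧
    (∀ x y z : G, gComm x (lazardAdd y z) = lazardAdd (gComm x y) (gComm x z)) ∧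
    (∀ x : G, gComm x x = 1) ∧
    (∀ x y z : G, lazardAdd (gComm x (gComm y z))
      (lazardAdd (gComm y (gComm z x)) (gComm z (gComm x y))) = 1) := by
  have hC : ∀ x y g : G, Commute (gComm x y) g := fun x y g =>
    commute_of_gComm_eq_one (hclass2 x y g)
  have hOdd : ∀ x : G, Odd (orderOf x) := by
    intro x
    have h1 : orderOf x ∣ p ^ n := hcard ▸ orderOf_dvd_natCard x
    rcases Nat.even_or_odd (orderOf x) with he | ho
    · exfalso
      have h2 : 2 ∣ p ^ n := dvd_trans he.two_dvd h1
      have h3 : 2 ∣ p := Nat.Prime.dvd_of_dvd_pow Nat.prime_two h2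
      exact hodd ((Nat.prime_dvd_prime_iff_eq Nat.prime_two hp).mp h3).symm
    · exact ho
  have hSC : ∀ x y g : G, Commute (gSqrt (gComm x y)) g := fun x y g =>
    (gSqrt_commute (hC x y g).symm).symm
  have hadd_one : lazardAdd (1 : G) 1 = 1 := by
    rw [lazardAdd, gComm_one_left, gSqrt_one, mul_one, mul_one]
  have hcomm : ∀ x y : G, lazardAdd x y = lazardAdd y x := by
    intro x y
    unfold lazardAdd
    rw [gComm_swap y x, gSqrt_inv hOdd]
    -- x * y * gSqrt (gComm y x) = y * x * (gSqrt (gComm y x))⁻¹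
    set s := gSqrt (gComm y x) with hs
    have hcs : gComm y x = s * s := (gSqrt_sq (hOdd _)).symm
    have e1 : x * y = y * x * (gComm y x)⁻¹ := by unfold gComm; group
    rw [e1, hcs]
    group
  refine ⟨hcomm, ?_, ?_, ?_, ?_, ?_, gComm_self, ?_⟩
  · -- associativity
    intro x y z
    have hw1 := hSC y x
    have hw2 := hSC z y
    have hA := hSC z x
    unfold lazardAdd
    rw [gComm_mul_central_right hw1, gComm_mul_right hC,
        gSqrt_mul hOdd ((hC z x (gComm z y)).symm.symm),
        gComm_mul_central_left hw2, gComm_mul_left hC,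
        gSqrt_mul hOdd ((hC y x (gComm z x)).symm.symm)]
    calc x * y * gSqrt (gComm y x) * z * (gSqrt (gComm z x) * gSqrt (gComm z y))
        = x * y * (gSqrt (gComm y x) * (z * (gSqrt (gComm z x) * gSqrt (gComm z y)))) := by
          group
      _ = x * y * ((z * (gSqrt (gComm z x) * gSqrt (gComm z y))) * gSqrt (gComm y x)) := by
          rw [(hw1 _).eq]
      _ = x * y * (z * (gSqrt (gComm z x) * (gSqrt (gComm z y) * gSqrt (gComm y x)))) := by
          group
      _ = x * y * (z * ((gSqrt (gComm z y) * gSqrt (gComm y x)) * gSqrt (gComm z x))) := by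
          rw [(hA _).eq]
      _ = x * (y * z * gSqrt (gComm z y)) * (gSqrt (gComm y x) * gSqrt (gComm z x)) := by
          group
  · intro x
    rw [lazardAdd, gComm_one_left, gSqrt_one, mul_one, mul_one]
  · intro x
    rw [lazardAdd, gComm_inv_self, gSqrt_one, mul_one, mul_inv_cancel]
  · intro x y z
    rw [lazardAdd, gComm_mul_central_left (hSC y x), gComm_mul_left hC,
        lazardAdd, gComm_eq_one_of_commute (hC y z (gComm x z)), gSqrt_one, mul_one]
  · intro x y z
    rw [lazardAdd, gComm_mul_central_right (hSC z y), gComm_mul_right hC,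
        lazardAdd, gComm_eq_one_of_commute (hC x z (gComm x y)), gSqrt_one, mul_one]
  · intro x y z
    rw [gComm_eq_one_of_commute (hC y z x).symm,
        gComm_eq_one_of_commute (hC z x y).symm,
        gComm_eq_one_of_commute (hC x y z).symm,
        hadd_one, hadd_one]
end

section
/- Let 𝔬 be a discrete valuation ring with maximal ideal 𝔭 and uniformizer t, and let B = 𝔬/𝔭^{μ₁} ⊕ 𝔬/𝔭^{μ₂} with μ₁ > μ₂ ≥ 1. A pair of matrices (Y, Z) ∈ GL₂(𝔬/𝔭) × GL₂(𝔬/𝔭) arises as the induced action of an automorphism of B on (B/𝔭B, B[𝔭]) (with respect to the bases induced by the generators e₁, e₂ and t^{μ₁−1}e₁, t^{μ₂−1}e₂) if and only if Y is lower triangular, Z is upper triangular, and the diagonals of Y and Z coincide. -/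
section Aux
variable {R : Type} [CommRing R]

lemma smul_mk' (I : Ideal R) (r x : R) :
    r • Ideal.Quotient.mk I x = Ideal.Quotient.mk I (r * x) := by
  rw [← smul_eq_mul]
  exact (Submodule.Quotient.mk_smul I r x).symm

lemma mk_eq_zero_iff_dvd (a x : R) :
    Ideal.Quotient.mk (Ideal.span {a}) x = 0 ↔ a ∣ x := by
  rw [Ideal.Quotient.eq_zero_iff_mem, Ideal.mem_span_singleton]

/-- shear (x,y) ↦ (x + g y, y) -/
def shearFst {M N : Type} [AddCommGroup M] [AddCommGroup N] [Module R M] [Module R N]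
    (g : N →ₗ[R] M) : (M × N) ≃ₗ[R] (M × N) :=
  LinearEquiv.ofLinear
    (LinearMap.prod (LinearMap.fst R M N + g ∘ₗ LinearMap.snd R M N) (LinearMap.snd R M N))
    (LinearMap.prod (LinearMap.fst R M N - g ∘ₗ LinearMap.snd R M N) (LinearMap.snd R M N))
    (by ext x <;> simp) (by ext x <;> simp)

/-- shear (x,y) ↦ (x, y + g x) -/
def shearSnd {M N : Type} [AddCommGroup M] [AddCommGroup N] [Module R M] [Module R N]
    (g : M →ₗ[R] N) : (M × N) ≃ₗ[R] (M × N) :=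
  LinearEquiv.ofLinear
    (LinearMap.prod (LinearMap.fst R M N) (LinearMap.snd R M N + g ∘ₗ LinearMap.fst R M N))
    (LinearMap.prod (LinearMap.fst R M N) (LinearMap.snd R M N - g ∘ₗ LinearMap.fst R M N))
    (by ext x <;> simp) (by ext x <;> simp)

@[simp] lemma shearFst_apply {M N : Type} [AddCommGroup M] [AddCommGroup N] [Module R M]
    [Module R N] (g : N →ₗ[R] M) (p : M × N) : shearFst g p = (p.1 + g p.2, p.2) := rfl

@[simp] lemma shearSnd_apply {M N : Type} [AddCommGroup M] [AddCommGroup N] [Module R M]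
    [Module R N] (g : M →ₗ[R] N) (p : M × N) : shearSnd g p = (p.1, p.2 + g p.1) := rfl

end Aux

section Maps
variable {R : Type} [CommRing R]

/-- natural projection R/(a) → R/(b) when b ∣ a -/
def projQ (a b : R) (h : b ∣ a) : (R ⧸ Ideal.span {a}) →ₗ[R] (R ⧸ Ideal.span {b}) :=
  Submodule.mapQ _ _ LinearMap.id (by
    intro x hx
    simp only [Submodule.mem_comap, LinearMap.id_coe, id_eq]
    exact Ideal.span_singleton_le_span_singleton.mpr h hx)

@[simp] lemma projQ_mk (a b : R) (h : b ∣ a) (x : R) :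
    projQ a b h (Ideal.Quotient.mk (Ideal.span {a}) x) = Ideal.Quotient.mk (Ideal.span {b}) x :=
  rfl

/-- multiplication by c : R/(a) → R/(b) when b ∣ c * a -/
def mulQ (a b c : R) (h : b ∣ c * a) : (R ⧸ Ideal.span {a}) →ₗ[R] (R ⧸ Ideal.span {b}) :=
  Submodule.mapQ _ _ (LinearMap.lsmul R R c) (by
    rw [Ideal.span_le]
    intro x hx
    simp only [Set.mem_singleton_iff] at hx
    subst hx
    simp only [SetLike.mem_coe, Submodule.mem_comap, LinearMap.lsmul_apply, smul_eq_mul]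
    exact Ideal.mem_span_singleton.mpr h)

@[simp] lemma mulQ_mk (a b c : R) (h : b ∣ c * a) (x : R) :
    mulQ a b c h (Ideal.Quotient.mk (Ideal.span {a}) x) = Ideal.Quotient.mk (Ideal.span {b}) (c * x) := by
  show Submodule.mapQ _ _ _ _ (Submodule.Quotient.mk x) = _
  rw [Submodule.mapQ_apply]
  simp [smul_eq_mul]

end Maps

section More
variable {R : Type} [CommRing R]

lemma smul_one_quot (I : Ideal R) (r : R) :
    r • (1 : R ⧸ I) = Ideal.Quotient.mk I r := by
  rw [show (1 : R ⧸ I) = Ideal.Quotient.mk I 1 from (map_one _).symm, smul_mk', mul_one]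

lemma dvd_of_pow_mul_dvd [IsDomain R] {t : R} (h0 : t ≠ 0) {n m : ℕ} (hnm : m < n) {x : R}
    (h : t ^ n ∣ t ^ m * x) : t ∣ x := by
  have h1 : t ^ m * t ^ (n - m) ∣ t ^ m * x := by
    rw [← pow_add]
    convert h using 2
    omega
  have h2 := (mul_dvd_mul_iff_left (pow_ne_zero m h0)).mp h1
  exact dvd_trans (dvd_pow_self t (by omega : n - m ≠ 0)) h2

lemma isUnit_of_mk_ne_zero [IsDomain R] [IsDiscreteValuationRing R] {t : R} (ht : Irreducible t)
    {a : R} (h : Ideal.Quotient.mk (Ideal.span {t}) a ≠ 0) : IsUnit a := by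
  by_contra hu
  apply h
  rw [Ideal.Quotient.eq_zero_iff_mem, ← ht.maximalIdeal_eq]
  exact hu

lemma smul_quot_eq (I : Ideal R) (r : R) (x : R ⧸ I) :
    r • x = Ideal.Quotient.mk I r * x := by
  rw [Algebra.smul_def, Ideal.Quotient.algebraMap_eq]

/-- diagonal automorphism by units -/
def diagE {M N : Type} [AddCommGroup M] [AddCommGroup N] [Module R M] [Module R N]
    (u v : Rˣ) : (M × N) ≃ₗ[R] (M × N) :=
  LinearEquiv.ofLinear
    (LinearMap.prodMap ((u : R) • LinearMap.id) ((v : R) • LinearMap.id))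
    (LinearMap.prodMap (((u⁻¹ : Rˣ) : R) • LinearMap.id) (((v⁻¹ : Rˣ) : R) • LinearMap.id))
    (by ext x <;> simp [smul_smul, Units.mul_inv, Units.inv_mul])
    (by ext x <;> simp [smul_smul, Units.mul_inv, Units.inv_mul])

@[simp] lemma diagE_apply {M N : Type} [AddCommGroup M] [AddCommGroup N] [Module R M]
    [Module R N] (u v : Rˣ) (p : M × N) : diagE u v p = ((u : R) • p.1, (v : R) • p.2) := rfl

lemma one_eq_mk (I : Ideal R) : (1 : R ⧸ I) = Ideal.Quotient.mk I 1 := (map_one _).symm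

end More

/-- Let `𝔬` be a discrete valuation ring with maximal ideal `𝔭 = (t)` and finite
residue field, and `B = 𝔬/𝔭^{μ₁} ⊕ 𝔬/𝔭^{μ₂}` with `μ₁ > μ₂ ≥ 1`.  A pair of
invertible matrices `(Y, Z)` over the residue field arises as the action induced by
an automorphism of `B` on `(B/𝔭B, B[𝔭])` — with respect to the bases induced by the
generators `e₁, e₂` and `t^{μ₁−1}e₁, t^{μ₂−1}e₂` — if and only if `Y` is lower
triangular, `Z` is upper triangular, and the diagonals of `Y` and `Z` coincide. -/
theorem automorphism_induced_pair_iff (𝔬 : Type) [CommRing 𝔬] [IsDomain 𝔬]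
    [IsDiscreteValuationRing 𝔬] (t : 𝔬) (ht : Irreducible t)
    [Finite (𝔬 ⧸ Ideal.span {t})]
    (μ₁ μ₂ : ℕ) (h21 : 1 ≤ μ₂) (h12 : μ₂ < μ₁)
    (Y Z : Matrix (Fin 2) (Fin 2) (𝔬 ⧸ Ideal.span {t}))
    (hY : IsUnit Y.det) (hZ : IsUnit Z.det) :
    (∃ (h : ((𝔬 ⧸ Ideal.span {t ^ μ₁}) × (𝔬 ⧸ Ideal.span {t ^ μ₂})) ≃ₗ[𝔬]
            ((𝔬 ⧸ Ideal.span {t ^ μ₁}) × (𝔬 ⧸ Ideal.span {t ^ μ₂})))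
       (Y' Z' : Matrix (Fin 2) (Fin 2) 𝔬),
        (∀ i j, Ideal.Quotient.mk (Ideal.span {t}) (Y' i j) = Y i j) ∧
        (∀ i j, Ideal.Quotient.mk (Ideal.span {t}) (Z' i j) = Z i j) ∧
        (∃ b₁ : (𝔬 ⧸ Ideal.span {t ^ μ₁}) × (𝔬 ⧸ Ideal.span {t ^ μ₂}),
          h (1, 0) = Y' 0 0 • (1, 0) + Y' 1 0 • (0, 1) + t • b₁) ∧
        (∃ b₂ : (𝔬 ⧸ Ideal.span {t ^ μ₁}) × (𝔬 ⧸ Ideal.span {t ^ μ₂}),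
          h (0, 1) = Y' 0 1 • (1, 0) + Y' 1 1 • (0, 1) + t • b₂) ∧
        (h (Ideal.Quotient.mk (Ideal.span {t ^ μ₁}) (t ^ (μ₁ - 1)), 0) =
          Z' 0 0 • (Ideal.Quotient.mk (Ideal.span {t ^ μ₁}) (t ^ (μ₁ - 1)), 0) +
          Z' 1 0 • (0, Ideal.Quotient.mk (Ideal.span {t ^ μ₂}) (t ^ (μ₂ - 1)))) ∧
        (h (0, Ideal.Quotient.mk (Ideal.span {t ^ μ₂}) (t ^ (μ₂ - 1))) =
          Z' 0 1 • (Ideal.Quotient.mk (Ideal.span {t ^ μ₁}) (t ^ (μ₁ - 1)), 0) +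
          Z' 1 1 • (0, Ideal.Quotient.mk (Ideal.span {t ^ μ₂}) (t ^ (μ₂ - 1)))))
    ↔ (Y 0 1 = 0 ∧ Z 1 0 = 0 ∧ Y 0 0 = Z 0 0 ∧ Y 1 1 = Z 1 1) := by
  have ht0 : t ≠ 0 := ht.ne_zero
  have resid_eq : ∀ x y : 𝔬, t ∣ x - y →
      Ideal.Quotient.mk (Ideal.span {t}) x = Ideal.Quotient.mk (Ideal.span {t}) y := by
    intro x y hxy
    rw [Ideal.Quotient.mk_eq_mk_iff_sub_mem, Ideal.mem_span_singleton]
    exact hxy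
  constructor
  · rintro ⟨h, Y', Z', hYl, hZl, ⟨⟨b₁₁, b₁₂⟩, hb₁⟩, ⟨⟨b₂₁, b₂₂⟩, hb₂⟩, hz1, hz2⟩
    obtain ⟨β₁, hβ₁⟩ := Ideal.Quotient.mk_surjective b₁₁
    obtain ⟨β₂, hβ₂⟩ := Ideal.Quotient.mk_surjective b₁₂
    obtain ⟨γ₁, hγ₁⟩ := Ideal.Quotient.mk_surjective b₂₁
    obtain ⟨γ₂, hγ₂⟩ := Ideal.Quotient.mk_surjective b₂₂
    have h10 : h (1, 0) = (Ideal.Quotient.mk (Ideal.span {t ^ μ₁}) (Y' 0 0 + t * β₁),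
        Ideal.Quotient.mk (Ideal.span {t ^ μ₂}) (Y' 1 0 + t * β₂)) := by
      rw [hb₁, ← hβ₁, ← hβ₂]
      ext
      · simp [smul_mk', smul_one_quot, map_add]
      · simp [smul_mk', smul_one_quot, map_add]
    have h01 : h (0, 1) = (Ideal.Quotient.mk (Ideal.span {t ^ μ₁}) (Y' 0 1 + t * γ₁),
        Ideal.Quotient.mk (Ideal.span {t ^ μ₂}) (Y' 1 1 + t * γ₂)) := by
      rw [hb₂, ← hγ₁, ← hγ₂]
      ext
      · simp [smul_mk', smul_one_quot, map_add]
      · simp [smul_mk', smul_one_quot, map_add]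
    -- Y 0 1 = 0
    have key1 : (t ^ μ₂) • h (0, 1) = 0 := by
      rw [← map_smul, show (t ^ μ₂) • ((0 : 𝔬 ⧸ Ideal.span {t ^ μ₁}),
          (1 : 𝔬 ⧸ Ideal.span {t ^ μ₂})) = 0 by
        ext
        · simp
        · simp only [Prod.smul_mk, smul_one_quot, Prod.snd_zero, smul_zero]
          rw [mk_eq_zero_iff_dvd], map_zero]
    have hy01 : Y 0 1 = 0 := by
      rw [← hYl 0 1]
      rw [h01] at key1
      have c := congrArg Prod.fst key1
      simp only [Prod.smul_mk, Prod.fst_zero, smul_quot_eq, ← map_pow, ← map_mul] at c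
      rw [mk_eq_zero_iff_dvd] at c
      have c1 : t ^ μ₁ ∣ t ^ μ₂ * (Y' 0 1 + t * γ₁) := by
        convert c using 1 <;> ring
      have c2 : t ∣ Y' 0 1 + t * γ₁ := dvd_of_pow_mul_dvd ht0 h12 c1
      have c3 : t ∣ Y' 0 1 + t * γ₁ - t * γ₁ := dvd_sub c2 (Dvd.intro γ₁ rfl)
      rw [mk_eq_zero_iff_dvd]
      simpa using c3
    -- h (t^(μ₁-1), 0) = t^(μ₁-1) • h (1,0)
    have e1 : (Ideal.Quotient.mk (Ideal.span {t ^ μ₁}) (t ^ (μ₁ - 1)),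
          (0 : 𝔬 ⧸ Ideal.span {t ^ μ₂})) =
        (t ^ (μ₁ - 1)) • ((1 : 𝔬 ⧸ Ideal.span {t ^ μ₁}), (0 : 𝔬 ⧸ Ideal.span {t ^ μ₂})) := by
      ext
      · simp [smul_one_quot]
      · simp
    have hz1' : (t ^ (μ₁ - 1)) • h (1, 0) =
        Z' 0 0 • (Ideal.Quotient.mk (Ideal.span {t ^ μ₁}) (t ^ (μ₁ - 1)),
          (0 : 𝔬 ⧸ Ideal.span {t ^ μ₂})) +
        Z' 1 0 • ((0 : 𝔬 ⧸ Ideal.span {t ^ μ₁}),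
          Ideal.Quotient.mk (Ideal.span {t ^ μ₂}) (t ^ (μ₂ - 1))) := by
      rw [← map_smul, ← e1]
      exact hz1
    rw [h10] at hz1'
    have fst1 := congrArg Prod.fst hz1'
    have snd1 := congrArg Prod.snd hz1'
    simp only [Prod.smul_mk, Prod.fst_add, Prod.snd_add, smul_quot_eq, smul_zero, mul_zero,
      zero_add, add_zero, ← map_pow, ← map_mul] at fst1 snd1
    have hz10 : Z 1 0 = 0 := by
      rw [← hZl 1 0, mk_eq_zero_iff_dvd]
      have hzero : Ideal.Quotient.mk (Ideal.span {t ^ μ₂}) (t ^ (μ₁ - 1) * (Y' 1 0 + t * β₂)) = 0 := by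
        rw [mk_eq_zero_iff_dvd]
        exact Dvd.dvd.mul_right (pow_dvd_pow t (by omega)) _
      have c : Ideal.Quotient.mk (Ideal.span {t ^ μ₂}) (Z' 1 0 * t ^ (μ₂ - 1)) = 0 := by
        rw [← snd1]
        convert hzero using 2 <;> ring
      rw [mk_eq_zero_iff_dvd] at c
      have c2 : t ^ μ₂ ∣ t ^ (μ₂ - 1) * Z' 1 0 := by rwa [mul_comm] at c
      exact dvd_of_pow_mul_dvd ht0 (by omega) c2
    have hd00 : Y 0 0 = Z 0 0 := by
      rw [← hYl 0 0, ← hZl 0 0]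
      apply resid_eq
      rw [Ideal.Quotient.mk_eq_mk_iff_sub_mem, Ideal.mem_span_singleton] at fst1
      have h' : t ^ μ₁ ∣ t ^ (μ₁ - 1) * (Y' 0 0 - Z' 0 0 + t * β₁) := by
        convert fst1 using 1 <;> ring
      have c2 := dvd_of_pow_mul_dvd ht0 (by omega : μ₁ - 1 < μ₁) h'
      have c3 : t ∣ Y' 0 0 - Z' 0 0 + t * β₁ - t * β₁ := dvd_sub c2 (Dvd.intro β₁ rfl)
      have c4 : Y' 0 0 - Z' 0 0 + t * β₁ - t * β₁ = Y' 0 0 - Z' 0 0 := by ring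
      rwa [c4] at c3
    -- h (0, t^(μ₂-1)) = t^(μ₂-1) • h (0,1)
    have e2 : ((0 : 𝔬 ⧸ Ideal.span {t ^ μ₁}),
          Ideal.Quotient.mk (Ideal.span {t ^ μ₂}) (t ^ (μ₂ - 1))) =
        (t ^ (μ₂ - 1)) • ((0 : 𝔬 ⧸ Ideal.span {t ^ μ₁}), (1 : 𝔬 ⧸ Ideal.span {t ^ μ₂})) := by
      ext
      · simp
      · simp [smul_one_quot]
    have hz2' : (t ^ (μ₂ - 1)) • h (0, 1) =
        Z' 0 1 • (Ideal.Quotient.mk (Ideal.span {t ^ μ₁}) (t ^ (μ₁ - 1)),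
          (0 : 𝔬 ⧸ Ideal.span {t ^ μ₂})) +
        Z' 1 1 • ((0 : 𝔬 ⧸ Ideal.span {t ^ μ₁}),
          Ideal.Quotient.mk (Ideal.span {t ^ μ₂}) (t ^ (μ₂ - 1))) := by
      rw [← map_smul, ← e2]
      exact hz2
    rw [h01] at hz2'
    have snd2 := congrArg Prod.snd hz2'
    simp only [Prod.smul_mk, Prod.snd_add, smul_quot_eq, smul_zero, mul_zero,
      zero_add, add_zero, ← map_pow, ← map_mul] at snd2
    have hd11 : Y 1 1 = Z 1 1 := by
      rw [← hYl 1 1, ← hZl 1 1]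
      apply resid_eq
      rw [Ideal.Quotient.mk_eq_mk_iff_sub_mem, Ideal.mem_span_singleton] at snd2
      have h' : t ^ μ₂ ∣ t ^ (μ₂ - 1) * (Y' 1 1 - Z' 1 1 + t * γ₂) := by
        convert snd2 using 1 <;> ring
      have c2 := dvd_of_pow_mul_dvd ht0 (by omega : μ₂ - 1 < μ₂) h'
      have c3 : t ∣ Y' 1 1 - Z' 1 1 + t * γ₂ - t * γ₂ := dvd_sub c2 (Dvd.intro γ₂ rfl)
      have c4 : Y' 1 1 - Z' 1 1 + t * γ₂ - t * γ₂ = Y' 1 1 - Z' 1 1 := by ring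
      rwa [c4] at c3
    exact ⟨hy01, hz10, hd00, hd11⟩
  · rintro ⟨hy01, hz10, hd00, hd11⟩
    obtain ⟨a, ha⟩ := Ideal.Quotient.mk_surjective (Y 0 0)
    obtain ⟨b, hb⟩ := Ideal.Quotient.mk_surjective (Y 1 0)
    obtain ⟨d, hd⟩ := Ideal.Quotient.mk_surjective (Y 1 1)
    obtain ⟨c', hc⟩ := Ideal.Quotient.mk_surjective (Z 0 1)
    haveI : Nontrivial (𝔬 ⧸ Ideal.span {t}) :=
      Ideal.Quotient.nontrivial_iff.mpr (fun hcon => ht.not_isUnit (Ideal.span_singleton_eq_top.mp hcon))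
    have hdet : IsUnit (Y 0 0 * Y 1 1) := by
      have h' := hY
      rw [Matrix.det_fin_two, hy01] at h'
      simpa using h'
    have hua : IsUnit a :=
      isUnit_of_mk_ne_zero ht (by rw [ha]; exact (isUnit_of_mul_isUnit_left hdet).ne_zero)
    have hud : IsUnit d :=
      isUnit_of_mk_ne_zero ht (by rw [hd]; exact (isUnit_of_mul_isUnit_right hdet).ne_zero)
    obtain ⟨ua, hua'⟩ := hua
    obtain ⟨ud, hud'⟩ := hud
    have hdd : d * ((ud⁻¹ : 𝔬ˣ) : 𝔬) = 1 := by rw [← hud']; exact ud.mul_inv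
    have hdd2 : ((ud⁻¹ : 𝔬ˣ) : 𝔬) * d = 1 := by rw [← hud']; exact ud.inv_mul
    have hmul : t ^ μ₁ ∣ t ^ (μ₁ - μ₂) * t ^ μ₂ := by
      rw [← pow_add]; exact pow_dvd_pow t (by omega)
    have hpow : t ^ (μ₁ - μ₂) * t ^ (μ₂ - 1) = t ^ (μ₁ - 1) := by
      rw [← pow_add]; congr 1; omega
    have hsplit : t ^ (μ₁ - μ₂) = t * t ^ (μ₁ - μ₂ - 1) := by
      rw [← pow_succ']; congr 1; omega
    set r : 𝔬 := ((ud⁻¹ : 𝔬ˣ) : 𝔬) * b with hr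
    set sc : 𝔬 := c' * ((ud⁻¹ : 𝔬ˣ) : 𝔬) with hsc
    set H : ((𝔬 ⧸ Ideal.span {t ^ μ₁}) × (𝔬 ⧸ Ideal.span {t ^ μ₂})) ≃ₗ[𝔬]
        ((𝔬 ⧸ Ideal.span {t ^ μ₁}) × (𝔬 ⧸ Ideal.span {t ^ μ₂})) :=
      (shearSnd (r • projQ (t ^ μ₁) (t ^ μ₂) (pow_dvd_pow t h12.le))).trans
        ((diagE ua ud).trans
          (shearFst (sc • mulQ (t ^ μ₂) (t ^ μ₁) (t ^ (μ₁ - μ₂)) hmul))) with hH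
    have hcomp : ∀ x y : 𝔬, H (Ideal.Quotient.mk (Ideal.span {t ^ μ₁}) x,
        Ideal.Quotient.mk (Ideal.span {t ^ μ₂}) y) =
        (Ideal.Quotient.mk (Ideal.span {t ^ μ₁}) (a * x + sc * (t ^ (μ₁ - μ₂) * (d * (y + r * x)))),
         Ideal.Quotient.mk (Ideal.span {t ^ μ₂}) (d * (y + r * x))) := by
      intro x y
      rw [hH]
      simp only [LinearEquiv.trans_apply, shearSnd_apply, diagE_apply, shearFst_apply,
        LinearMap.smul_apply, projQ_mk, mulQ_mk, smul_mk', smul_add, hua', hud',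
        ← map_add, ← map_mul]
      try exact Prod.ext (congrArg _ (by ring)) (congrArg _ (by ring))
    have hone1 : (1 : 𝔬 ⧸ Ideal.span {t ^ μ₁}) = Ideal.Quotient.mk (Ideal.span {t ^ μ₁}) 1 :=
      (map_one _).symm
    have hone2 : (1 : 𝔬 ⧸ Ideal.span {t ^ μ₂}) = Ideal.Quotient.mk (Ideal.span {t ^ μ₂}) 1 :=
      (map_one _).symm
    have hzero1 : (0 : 𝔬 ⧸ Ideal.span {t ^ μ₁}) = Ideal.Quotient.mk (Ideal.span {t ^ μ₁}) 0 :=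
      (map_zero _).symm
    have hzero2 : (0 : 𝔬 ⧸ Ideal.span {t ^ μ₂}) = Ideal.Quotient.mk (Ideal.span {t ^ μ₂}) 0 :=
      (map_zero _).symm
    have eY00 : (!![a + sc * (t ^ (μ₁ - μ₂) * b), 0; b, d] : Matrix (Fin 2) (Fin 2) 𝔬) 0 0 =
      a + sc * (t ^ (μ₁ - μ₂) * b) := rfl
    have eY01 : (!![a + sc * (t ^ (μ₁ - μ₂) * b), 0; b, d] : Matrix (Fin 2) (Fin 2) 𝔬) 0 1 = 0 := rfl
    have eY10 : (!![a + sc * (t ^ (μ₁ - μ₂) * b), 0; b, d] : Matrix (Fin 2) (Fin 2) 𝔬) 1 0 = b := rfl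
    have eY11 : (!![a + sc * (t ^ (μ₁ - μ₂) * b), 0; b, d] : Matrix (Fin 2) (Fin 2) 𝔬) 1 1 = d := rfl
    have eZ00 : (!![a, c'; 0, d] : Matrix (Fin 2) (Fin 2) 𝔬) 0 0 = a := rfl
    have eZ01 : (!![a, c'; 0, d] : Matrix (Fin 2) (Fin 2) 𝔬) 0 1 = c' := rfl
    have eZ10 : (!![a, c'; 0, d] : Matrix (Fin 2) (Fin 2) 𝔬) 1 0 = 0 := rfl
    have eZ11 : (!![a, c'; 0, d] : Matrix (Fin 2) (Fin 2) 𝔬) 1 1 = d := rfl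
    have hA : H (1, 0) = (Ideal.Quotient.mk (Ideal.span {t ^ μ₁}) (a + sc * (t ^ (μ₁ - μ₂) * b)),
        Ideal.Quotient.mk (Ideal.span {t ^ μ₂}) b) := by
      have h' := hcomp 1 0
      rw [← hone1, ← hzero2] at h'
      rw [h']
      refine Prod.ext ?_ ?_
      · show Ideal.Quotient.mk (Ideal.span {t ^ μ₁}) (a * 1 + sc * (t ^ (μ₁ - μ₂) * (d * (0 + r * 1)))) =
          Ideal.Quotient.mk (Ideal.span {t ^ μ₁}) (a + sc * (t ^ (μ₁ - μ₂) * b))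
        refine congrArg _ ?_
        linear_combination (sc * (t ^ (μ₁ - μ₂) * b)) * hdd
      · show Ideal.Quotient.mk (Ideal.span {t ^ μ₂}) (d * (0 + r * 1)) =
          Ideal.Quotient.mk (Ideal.span {t ^ μ₂}) b
        refine congrArg _ ?_
        linear_combination b * hdd
    have hB : H (0, 1) = (Ideal.Quotient.mk (Ideal.span {t ^ μ₁}) (sc * (t ^ (μ₁ - μ₂) * d)),
        Ideal.Quotient.mk (Ideal.span {t ^ μ₂}) d) := by
      have h' := hcomp 0 1
      rw [← hzero1, ← hone2] at h'
      rw [h']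
      refine Prod.ext ?_ ?_
      · show Ideal.Quotient.mk (Ideal.span {t ^ μ₁}) (a * 0 + sc * (t ^ (μ₁ - μ₂) * (d * (1 + r * 0)))) =
          Ideal.Quotient.mk (Ideal.span {t ^ μ₁}) (sc * (t ^ (μ₁ - μ₂) * d))
        exact congrArg _ (by ring)
      · show Ideal.Quotient.mk (Ideal.span {t ^ μ₂}) (d * (1 + r * 0)) =
          Ideal.Quotient.mk (Ideal.span {t ^ μ₂}) d
        exact congrArg _ (by ring)
    have hC : H (Ideal.Quotient.mk (Ideal.span {t ^ μ₁}) (t ^ (μ₁ - 1)), 0) =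
        (Ideal.Quotient.mk (Ideal.span {t ^ μ₁}) (a * t ^ (μ₁ - 1)), 0) := by
      have h' := hcomp (t ^ (μ₁ - 1)) 0
      rw [← hzero2] at h'
      rw [h']
      refine Prod.ext ?_ ?_
      · show Ideal.Quotient.mk (Ideal.span {t ^ μ₁})
            (a * t ^ (μ₁ - 1) + sc * (t ^ (μ₁ - μ₂) * (d * (0 + r * t ^ (μ₁ - 1))))) =
          Ideal.Quotient.mk (Ideal.span {t ^ μ₁}) (a * t ^ (μ₁ - 1))
        rw [Ideal.Quotient.mk_eq_mk_iff_sub_mem, Ideal.mem_span_singleton]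
        have hdvd : t ^ μ₁ ∣ t ^ (μ₁ - μ₂) * t ^ (μ₁ - 1) := by
          rw [← pow_add]; exact pow_dvd_pow t (by omega)
        have h2 := hdvd.mul_left (sc * (d * r))
        convert h2 using 1
        ring
      · show Ideal.Quotient.mk (Ideal.span {t ^ μ₂}) (d * (0 + r * t ^ (μ₁ - 1))) =
          (0 : 𝔬 ⧸ Ideal.span {t ^ μ₂})
        rw [mk_eq_zero_iff_dvd]
        exact dvd_trans (pow_dvd_pow t (by omega : μ₂ ≤ μ₁ - 1)) ⟨d * r, by ring⟩
    have hD : H (0, Ideal.Quotient.mk (Ideal.span {t ^ μ₂}) (t ^ (μ₂ - 1))) =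
        (Ideal.Quotient.mk (Ideal.span {t ^ μ₁}) (c' * t ^ (μ₁ - 1)),
         Ideal.Quotient.mk (Ideal.span {t ^ μ₂}) (d * t ^ (μ₂ - 1))) := by
      have h' := hcomp 0 (t ^ (μ₂ - 1))
      rw [← hzero1] at h'
      rw [h']
      refine Prod.ext ?_ ?_
      · show Ideal.Quotient.mk (Ideal.span {t ^ μ₁})
            (a * 0 + sc * (t ^ (μ₁ - μ₂) * (d * (t ^ (μ₂ - 1) + r * 0)))) =
          Ideal.Quotient.mk (Ideal.span {t ^ μ₁}) (c' * t ^ (μ₁ - 1))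
        refine congrArg _ ?_
        linear_combination (c' * ((ud⁻¹ : 𝔬ˣ) : 𝔬) * d) * hpow + (c' * t ^ (μ₁ - 1)) * hdd2
      · show Ideal.Quotient.mk (Ideal.span {t ^ μ₂}) (d * (t ^ (μ₂ - 1) + r * 0)) =
          Ideal.Quotient.mk (Ideal.span {t ^ μ₂}) (d * t ^ (μ₂ - 1))
        exact congrArg _ (by ring)
    refine ⟨H, !![a + sc * (t ^ (μ₁ - μ₂) * b), 0; b, d], !![a, c'; 0, d], ?_, ?_, ?_, ?_, ?_, ?_⟩
    · intro i j
      fin_cases i <;> fin_cases j <;> simp only [Fin.zero_eta, Fin.mk_one]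
      · rw [eY00]
        have h0 : Ideal.Quotient.mk (Ideal.span {t}) (sc * (t ^ (μ₁ - μ₂) * b)) = 0 := by
          rw [mk_eq_zero_iff_dvd]
          exact ((dvd_pow_self t (by omega : μ₁ - μ₂ ≠ 0)).mul_right b).mul_left sc
        rw [map_add, h0, add_zero, ha]
      · rw [eY01, map_zero, hy01]
      · rw [eY10]; exact hb
      · rw [eY11]; exact hd
    · intro i j
      fin_cases i <;> fin_cases j <;> simp only [Fin.zero_eta, Fin.mk_one]
      · rw [eZ00, ha, hd00]
      · rw [eZ01]; exact hc
      · rw [eZ10, map_zero, hz10]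
      · rw [eZ11, hd, hd11]
    · refine ⟨0, ?_⟩
      rw [eY00, eY10, hA]
      simp only [Prod.smul_mk, smul_one_quot, smul_zero, zero_smul, Prod.mk_add_mk,
        add_zero, zero_add]
    · refine ⟨(Ideal.Quotient.mk (Ideal.span {t ^ μ₁}) (sc * (t ^ (μ₁ - μ₂ - 1) * d)), 0), ?_⟩
      rw [eY01, eY11, hB]
      simp only [Prod.smul_mk, smul_one_quot, smul_zero, zero_smul, smul_mk', Prod.mk_add_mk,
        add_zero, zero_add]
      refine Prod.ext ?_ ?_
      · show Ideal.Quotient.mk (Ideal.span {t ^ μ₁}) (sc * (t ^ (μ₁ - μ₂) * d)) =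
          Ideal.Quotient.mk (Ideal.span {t ^ μ₁}) (t * (sc * (t ^ (μ₁ - μ₂ - 1) * d)))
        refine congrArg _ ?_
        rw [hsplit]; ring
      · rfl
    · rw [eZ00, eZ10, hC]
      simp only [Prod.smul_mk, smul_one_quot, smul_zero, zero_smul, smul_mk', Prod.mk_add_mk,
        add_zero, zero_add, mul_zero]
    · rw [eZ01, eZ11, hD]
      simp only [Prod.smul_mk, smul_one_quot, smul_zero, zero_smul, smul_mk', Prod.mk_add_mk,
        add_zero, zero_add, mul_zero]
end
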